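/- Let G be a non-Hamiltonian graph on n ≥ 3 vertices possessing a Hamiltonian path v_1, v_2, …, v_n, with x = v_1 and y = v_n. Let S be the set of vertices adjacent to neither x nor y, and let S* = {v_i ∈ S : v_{i−1} y and v_{i+1} x are edges of G}. Then for every v_i ∈ S*, every neighbor of v_i is of the form v_j with either j < i and v_{j+1} ∈ S, or j > i and v_{j−1} ∈ S; moreover S* is an independent set and |N(S*)| ≤ 2|S|, where N(S*) denotes the set of vertices outside S* having a neighbor in S*. -/

import Mathlib

open SimpleGraph List

set_option linter.unusedSectionVars false

namespace Stmt15
variable {V : Type*} [DecidableEq V] {G : SimpleGraph V}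

def mkWalk (G : SimpleGraph V) : ∀ (a : V) (l : List V), List.Chain G.Adj a l → G.Walk a (l.getLastD a)
  | _, [], _ => Walk.nil
  | a, b :: t, h =>
    (Walk.cons (List.chain_cons.1 h).1 (mkWalk G b t (List.chain_cons.1 h).2)).copy rfl
      (List.getLastD_cons (a := a) (b := b) (l := t)).symm

lemma mkWalk_support (G : SimpleGraph V) : ∀ (a : V) (l : List V) (h : List.Chain G.Adj a l),
    (mkWalk G a l h).support = a :: l
  | _, [], _ => rfl
  | a, b :: t, h => by
    rw [mkWalk, Walk.support_copy, Walk.support_cons]; exact congrArg _ (mkWalk_support G b t _)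

lemma notmem_edges : ∀ {c a : V} (p : G.Walk c a), p.support.Nodup → 2 ≤ p.length → s(a, c) ∉ p.edges := by
  intro c a p
  induction p with
  | nil => simp
  | @cons u d w h q ih =>
    intro hnd hlen hmem
    rw [Walk.support_cons, List.nodup_cons] at hnd
    rw [Walk.edges_cons, List.mem_cons] at hmem
    rcases hmem with heq | hmem
    · rw [Sym2.eq_iff] at heq
      rcases heq with ⟨h1, h2⟩ | ⟨h1, h2⟩
      · exact hnd.1 (h1 ▸ q.end_mem_support)
      · subst h1
        cases q with
        | nil => simp [Walk.length_cons] at hlen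
        | cons h' r =>
          rw [Walk.support_cons, List.nodup_cons] at hnd
          exact hnd.2.1 r.end_mem_support
    · exact hnd.1 (q.snd_mem_support_of_mem_edges hmem)

lemma ham_of_list [Fintype V] (G : SimpleGraph V) (a : V) (l : List V)
    (h2 : List.Chain G.Adj a (l ++ [a])) (hnd : (a :: l).Nodup)
    (hall : ∀ w, w ∈ a :: l) (hlen : 2 ≤ l.length) : G.IsHamiltonian := by
  intro _
  match l, h2, hnd, hall, hlen with
  | c :: m, h2, hnd, hall, hlen =>
  rw [List.cons_append] at h2; replace h2 : G.Adj a c ∧ List.Chain G.Adj c (m ++ [a]) := List.chain_cons.1 h2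
  obtain ⟨hac, hch⟩ := h2
  rw [List.length_cons] at hlen
  have hlast : (m ++ [a]).getLastD c = a := by simp
  let p : G.Walk c a := (mkWalk G c (m ++ [a]) hch).copy rfl hlast
  have hsupp : p.support = c :: (m ++ [a]) := by
    rw [Walk.support_copy, mkWalk_support]
  have hnd2 : (c :: (m ++ [a])).Nodup :=
    ((List.perm_append_singleton a (c :: m)).nodup_iff).2 hnd
  have hnd' : p.support.Nodup := by rw [hsupp]; exact hnd2
  have hplen : p.support.length = p.length + 1 := Walk.length_support p
  rw [hsupp] at hplen
  simp only [List.length_cons, List.length_append, List.length_singleton] at hplen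
  have hlen' : 2 ≤ p.length := by omega
  have hcyc : (Walk.cons hac p).IsCycle :=
    (Walk.cons_isCycle_iff p hac).2 ⟨(Walk.isPath_def _).2 hnd', notmem_edges p hnd' hlen'⟩
  refine ⟨a, Walk.cons hac p, ?_⟩
  rw [Walk.isHamiltonianCycle_iff_isCycle_and_support_count_tail_eq_one]
  refine ⟨hcyc, fun b => ?_⟩
  rw [Walk.support_cons, List.tail_cons, hsupp]
  exact List.count_eq_one_of_mem hnd2
    (((List.perm_append_singleton a (c :: m)).mem_iff).2 (hall b))

lemma chain_block {R : ℕ → ℕ → Prop} : ∀ (k s c : ℕ) (rest : List ℕ),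
    (∀ t, s ≤ t → t < s + k → R t (t + 1)) → R c s → List.Chain R (s + k) rest →
    List.Chain R c (List.range' s (k + 1) ++ rest)
  | 0, s, c, rest, _, hc, hrest => by
    simpa [List.Chain] using List.chain_cons.2 ⟨hc, by simpa [List.Chain] using hrest⟩
  | k + 1, s, c, rest, hin, hc, hrest => by
    rw [List.range'_succ, List.cons_append]; apply List.chain_cons.2
    refine ⟨hc, chain_block k (s + 1) s rest (fun t ht1 ht2 => hin t (by omega) (by omega))
      (hin s (le_refl s) (by omega)) ?_⟩
    have : s + 1 + k = s + (k + 1) := by omega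
    rw [this]; exact hrest

lemma chain_block_rev {R : ℕ → ℕ → Prop} : ∀ (k s c : ℕ) (rest : List ℕ),
    (∀ t, s ≤ t → t < s + k → R (t + 1) t) → R c (s + k) → List.Chain R s rest →
    List.Chain R c ((List.range' s (k + 1)).reverse ++ rest)
  | 0, s, c, rest, _, hc, hrest => by
    simpa [List.Chain] using List.chain_cons.2 ⟨by simpa using hc, hrest⟩
  | k + 1, s, c, rest, hin, hc, hrest => by
    have hcat : List.range' s (k + 1 + 1) = List.range' s (k + 1) ++ [s + (k + 1)] := by
      have := List.range'_concat (step := 1) (s := s) (n := k + 1)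
      simpa using this
    rw [hcat, List.reverse_append, List.reverse_singleton, List.singleton_append,
      List.cons_append]
    exact List.chain_cons.2 ⟨hc, chain_block_rev k s (s + (k + 1)) rest
      (fun t ht1 ht2 => hin t ht1 (by omega)) (hin (s + k) (by omega) (by omega)) hrest⟩

lemma range'_split (s k k₁ m k₂ : ℕ) (h1 : s + k₁ = m) (h2 : k₁ + k₂ = k) :
    List.range' s k = List.range' s k₁ ++ List.range' m k₂ := by
  subst h1; subst h2
  rw [List.range'_append_1, Nat.add_comm]

lemma ham_of_idx [Fintype V] (G : SimpleGraph V) (n : ℕ) (hn : 3 ≤ n) (v : ℕ → V)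
    (hinj : ∀ i j, 1 ≤ i → i ≤ n → 1 ≤ j → j ≤ n → v i = v j → i = j)
    (hsurj : ∀ w : V, ∃ i, 1 ≤ i ∧ i ≤ n ∧ v i = w)
    (a : ℕ) (L : List ℕ)
    (hperm : (a :: L).Perm (List.range' 1 n))
    (hch : List.Chain (fun p q => G.Adj (v p) (v q)) a (L ++ [a])) :
    G.IsHamiltonian := by
  have hbd : ∀ k ∈ a :: L, 1 ≤ k ∧ k ≤ n := by
    intro k hk
    have := List.mem_range'_1.1 (hperm.mem_iff.1 hk)
    omega
  have hnd : (a :: L).Nodup := hperm.nodup_iff.2 (List.nodup_range' (s := 1) (n := n))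
  apply ham_of_list G (v a) (L.map v)
  · have he : (L.map v) ++ [v a] = (L ++ [a]).map v := by simp
    rw [he]
    exact (List.isChain_cons_map v).2 hch
  · exact hnd.map_on fun x hx y hy hxy =>
      hinj x y (hbd x hx).1 (hbd x hx).2 (hbd y hy).1 (hbd y hy).2 hxy
  · intro w
    obtain ⟨i, h1, h2, h3⟩ := hsurj w
    have hmem : i ∈ a :: L := hperm.mem_iff.2 (List.mem_range'_1.2 ⟨h1, by omega⟩)
    exact h3 ▸ List.mem_map_of_mem (f := v) hmem
  · have hl := hperm.length_eq
    simp only [List.length_cons, List.length_range'] at hl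
    rw [List.length_map]
    omega

end Stmt15
theorem stmt_15 {V : Type*} [Fintype V] [DecidableEq V] {n : ℕ} (hn : 3 ≤ n)
    (G : SimpleGraph V) (hham : ¬ G.IsHamiltonian)
    (v : ℕ → V)
    (hinj : ∀ i j, 1 ≤ i → i ≤ n → 1 ≤ j → j ≤ n → v i = v j → i = j)
    (hsurj : ∀ w : V, ∃ i, 1 ≤ i ∧ i ≤ n ∧ v i = w)
    (hpath : ∀ i, 1 ≤ i → i < n → G.Adj (v i) (v (i + 1)))
    (S Sstar NSstar : Set V)
    (hS : S = {w | w ≠ v 1 ∧ w ≠ v n ∧ ¬ G.Adj w (v 1) ∧ ¬ G.Adj w (v n)})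
    (hSstar : Sstar = {w | ∃ i, 1 ≤ i ∧ i ≤ n ∧ w = v i ∧ w ∈ S ∧
      G.Adj (v (i - 1)) (v n) ∧ G.Adj (v (i + 1)) (v 1)})
    (hNSstar : NSstar = {w | w ∉ Sstar ∧ ∃ u ∈ Sstar, G.Adj u w}) :
    (∀ i, 1 ≤ i → i ≤ n → v i ∈ Sstar → ∀ w, G.Adj (v i) w →
      ∃ j, 1 ≤ j ∧ j ≤ n ∧ w = v j ∧
        ((j < i ∧ v (j + 1) ∈ S) ∨ (i < j ∧ v (j - 1) ∈ S))) ∧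
    Sstar.Pairwise (fun a b => ¬ G.Adj a b) ∧
    NSstar.ncard ≤ 2 * S.ncard := by
  have part1 : ∀ i, 1 ≤ i → i ≤ n → v i ∈ Sstar → ∀ w, G.Adj (v i) w →
      ∃ j, 1 ≤ j ∧ j ≤ n ∧ w = v j ∧
        ((j < i ∧ v (j + 1) ∈ S) ∨ (i < j ∧ v (j - 1) ∈ S)) := by
    intro i hi1 hin hstar w hadj
    rw [hSstar] at hstar
    obtain ⟨i', hi'1, hi'n, hvi, hviS, hy, hx⟩ := hstar
    have hii : i' = i := (hinj i i' hi1 hin hi'1 hi'n hvi).symm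
    rw [hii] at hy hx
    rw [hS] at hviS
    obtain ⟨hne1, hnen, hnadj1, hnadjn⟩ := hviS
    have hi2 : 2 ≤ i := by
      by_contra h
      have : i = 1 := by omega
      subst this
      exact hne1 rfl
    have hiln : i < n := by
      by_contra h
      have : i = n := by omega
      subst this
      exact hnen rfl
    obtain ⟨j, hj1, hjn, hwj⟩ := hsurj w
    rw [← hwj] at hadj
    have hji : j ≠ i := fun h => G.irrefl (h ▸ hadj)
    refine ⟨j, hj1, hjn, hwj.symm, ?_⟩
    rcases Nat.lt_or_ge j i with hlt | hge
    · -- j < i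
      left
      refine ⟨hlt, ?_⟩
      by_cases hj2 : j + 1 = i
      · rw [hj2, hS]
        exact ⟨hne1, hnen, hnadj1, hnadjn⟩
      · have hj2' : j + 1 < i := by omega
        rw [hS]
        refine ⟨?_, ?_, ?_, ?_⟩
        · intro h
          have := hinj (j+1) 1 (by omega) (by omega) (by omega) (by omega) h
          omega
        · intro h
          have := hinj (j+1) n (by omega) (by omega) (by omega) (by omega) h
          omega
        · -- cycle C1
          intro hcadj
          apply hham
          refine Stmt15.ham_of_idx G n hn v hinj hsurj i
            ((List.range' 1 (j-1+1)).reverse ++ (List.range' (j+1) (i-j-2+1) ++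
              (List.range' (i+1) (n-i-1+1)).reverse)) ?_ ?_
          · rw [← Multiset.coe_eq_coe]
            have hd : List.range' 1 n = List.range' 1 (j-1+1) ++ (List.range' (j+1) (i-j-2+1) ++
                ([i] ++ List.range' (i+1) (n-i-1+1))) := by
              rw [Stmt15.range'_split 1 n (j-1+1) (j+1) (n-j) (by omega) (by omega),
                  Stmt15.range'_split (j+1) (n-j) (i-j-2+1) i (n-i+1) (by omega) (by omega),
                  Stmt15.range'_split i (n-i+1) 1 (i+1) (n-i-1+1) (by omega) (by omega)]
              simp [List.append_assoc]
            rw [hd]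
            simp only [← Multiset.cons_coe, ← Multiset.coe_add, Multiset.coe_reverse,
              Multiset.coe_nil, ← Multiset.singleton_add, Multiset.cons_zero, add_zero]
            abel
          · rw [List.append_assoc, List.append_assoc]
            apply Stmt15.chain_block_rev (j-1) 1 i
            · exact fun t h1 h2 => (hpath t h1 (by omega)).symm
            · have e : 1 + (j-1) = j := by omega
              rw [e]; exact hadj
            · apply Stmt15.chain_block (i-j-2) (j+1) 1
              · exact fun t h1 h2 => hpath t (by omega) (by omega)
              · exact hcadj.symm
              · have e : j+1+(i-j-2) = i-1 := by omega
                rw [e]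
                apply Stmt15.chain_block_rev (n-i-1) (i+1) (i-1)
                · exact fun t h1 h2 => (hpath t (by omega) (by omega)).symm
                · have e2 : i+1+(n-i-1) = n := by omega
                  rw [e2]; exact hy
                · exact List.Chain.cons ((hpath i (by omega) hiln).symm) List.Chain.nil
        · -- cycle C2
          intro hcadj
          apply hham
          refine Stmt15.ham_of_idx G n hn v hinj hsurj i
            ((List.range' (j+1) (i-j-2+1)).reverse ++ ((List.range' (i+1) (n-i-1+1)).reverse ++
              List.range' 1 (j-1+1))) ?_ ?_
          · rw [← Multiset.coe_eq_coe]
            have hd : List.range' 1 n = List.range' 1 (j-1+1) ++ (List.range' (j+1) (i-j-2+1) ++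
                ([i] ++ List.range' (i+1) (n-i-1+1))) := by
              rw [Stmt15.range'_split 1 n (j-1+1) (j+1) (n-j) (by omega) (by omega),
                  Stmt15.range'_split (j+1) (n-j) (i-j-2+1) i (n-i+1) (by omega) (by omega),
                  Stmt15.range'_split i (n-i+1) 1 (i+1) (n-i-1+1) (by omega) (by omega)]
              simp [List.append_assoc]
            rw [hd]
            simp only [← Multiset.cons_coe, ← Multiset.coe_add, Multiset.coe_reverse,
              Multiset.coe_nil, ← Multiset.singleton_add, Multiset.cons_zero, add_zero]
            abel
          · rw [List.append_assoc, List.append_assoc]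
            apply Stmt15.chain_block_rev (i-j-2) (j+1) i
            · exact fun t h1 h2 => (hpath t (by omega) (by omega)).symm
            · have e : j+1+(i-j-2) = i - 1 := by omega
              rw [e]
              have h := hpath (i-1) (by omega) (by omega)
              rw [show i-1+1 = i by omega] at h
              exact h.symm
            · apply Stmt15.chain_block_rev (n-i-1) (i+1) (j+1)
              · exact fun t h1 h2 => (hpath t (by omega) (by omega)).symm
              · have e : i+1+(n-i-1) = n := by omega
                rw [e]; exact hcadj
              · apply Stmt15.chain_block (j-1) 1 (i+1)
                · exact fun t h1 h2 => hpath t (by omega) (by omega)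
                · exact hx
                · have e : 1+(j-1) = j := by omega
                  rw [e]
                  exact List.Chain.cons hadj.symm List.Chain.nil
    · -- i < j
      have hgt : i < j := by omega
      right
      refine ⟨hgt, ?_⟩
      by_cases hj2 : j - 1 = i
      · rw [hj2, hS]
        exact ⟨hne1, hnen, hnadj1, hnadjn⟩
      · have hj2' : i + 1 < j := by omega
        rw [hS]
        refine ⟨?_, ?_, ?_, ?_⟩
        · intro h
          have := hinj (j-1) 1 (by omega) (by omega) (by omega) (by omega) h
          omega
        · intro h
          have := hinj (j-1) n (by omega) (by omega) (by omega) (by omega) h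
          omega
        · -- cycle C3
          intro hcadj
          apply hham
          refine Stmt15.ham_of_idx G n hn v hinj hsurj i
            (List.range' (i+1) (j-i-2+1) ++ (List.range' 1 (i-2+1) ++
              (List.range' j (n-j+1)).reverse)) ?_ ?_
          · rw [← Multiset.coe_eq_coe]
            have hd : List.range' 1 n = List.range' 1 (i-2+1) ++ ([i] ++
                (List.range' (i+1) (j-i-2+1) ++ List.range' j (n-j+1))) := by
              rw [Stmt15.range'_split 1 n (i-2+1) i (n-i+1) (by omega) (by omega),
                  Stmt15.range'_split i (n-i+1) 1 (i+1) (n-i) (by omega) (by omega),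
                  Stmt15.range'_split (i+1) (n-i) (j-i-2+1) j (n-j+1) (by omega) (by omega)]
              simp [List.append_assoc]
            rw [hd]
            simp only [← Multiset.cons_coe, ← Multiset.coe_add, Multiset.coe_reverse,
              Multiset.coe_nil, ← Multiset.singleton_add, Multiset.cons_zero, add_zero]
            abel
          · rw [List.append_assoc, List.append_assoc]
            apply Stmt15.chain_block (j-i-2) (i+1) i
            · exact fun t h1 h2 => hpath t (by omega) (by omega)
            · exact hpath i (by omega) hiln
            · have e : i+1+(j-i-2) = j-1 := by omega
              rw [e]
              apply Stmt15.chain_block (i-2) 1 (j-1)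
              · exact fun t h1 h2 => hpath t (by omega) (by omega)
              · exact hcadj
              · have e2 : 1+(i-2) = i-1 := by omega
                rw [e2]
                apply Stmt15.chain_block_rev (n-j) j (i-1)
                · exact fun t h1 h2 => (hpath t (by omega) (by omega)).symm
                · have e3 : j+(n-j) = n := by omega
                  rw [e3]; exact hy
                · exact List.Chain.cons hadj.symm List.Chain.nil
        · -- cycle C4
          intro hcadj
          apply hham
          refine Stmt15.ham_of_idx G n hn v hinj hsurj i
            (List.range' j (n-j+1) ++ ((List.range' (i+1) (j-i-2+1)).reverse ++
              List.range' 1 (i-2+1))) ?_ ?_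
          · rw [← Multiset.coe_eq_coe]
            have hd : List.range' 1 n = List.range' 1 (i-2+1) ++ ([i] ++
                (List.range' (i+1) (j-i-2+1) ++ List.range' j (n-j+1))) := by
              rw [Stmt15.range'_split 1 n (i-2+1) i (n-i+1) (by omega) (by omega),
                  Stmt15.range'_split i (n-i+1) 1 (i+1) (n-i) (by omega) (by omega),
                  Stmt15.range'_split (i+1) (n-i) (j-i-2+1) j (n-j+1) (by omega) (by omega)]
              simp [List.append_assoc]
            rw [hd]
            simp only [← Multiset.cons_coe, ← Multiset.coe_add, Multiset.coe_reverse,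
              Multiset.coe_nil, ← Multiset.singleton_add, Multiset.cons_zero, add_zero]
            abel
          · rw [List.append_assoc, List.append_assoc]
            apply Stmt15.chain_block (n-j) j i
            · exact fun t h1 h2 => hpath t (by omega) (by omega)
            · exact hadj
            · have e : j+(n-j) = n := by omega
              rw [e]
              apply Stmt15.chain_block_rev (j-i-2) (i+1) n
              · exact fun t h1 h2 => (hpath t (by omega) (by omega)).symm
              · have e2 : i+1+(j-i-2) = j-1 := by omega
                rw [e2]; exact hcadj.symm
              · apply Stmt15.chain_block (i-2) 1 (i+1)
                · exact fun t h1 h2 => hpath t (by omega) (by omega)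
                · exact hx
                · have e2 : 1+(i-2) = i-1 := by omega
                  rw [e2]
                  have h := hpath (i-1) (by omega) (by omega)
                  rw [show i-1+1 = i by omega] at h
                  exact List.Chain.cons h List.Chain.nil
  refine ⟨part1, ?_, ?_⟩
  · -- independence
    intro x hx' y hy' hne hadj
    have hx2 := hx'
    rw [hSstar] at hx' hy'
    obtain ⟨i, hi1, hin, rfl, hiS, hiy, hix⟩ := hx'
    obtain ⟨j', hj'1, hj'n, rfl, hjS, hjy, hjx⟩ := hy'
    obtain ⟨j, hj1, hjn, hwj, hcase⟩ := part1 i hi1 hin hx2 (v j') hadj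
    have hjj : j' = j := hinj j' j hj'1 hj'n hj1 hjn hwj
    subst hjj
    rcases hcase with ⟨_, hjS2⟩ | ⟨_, hjS2⟩
    · rw [hS] at hjS2
      exact hjS2.2.2.1 hjx
    · rw [hS] at hjS2
      exact hjS2.2.2.2 hjy
  · -- cardinality
    choose idx hidx1 hidx2 hidx3 using hsurj
    have hsub : NSstar ⊆ ((fun w => v (idx w - 1)) '' S) ∪ ((fun w => v (idx w + 1)) '' S) := by
      intro w hw
      rw [hNSstar] at hw
      obtain ⟨hwns, u, huS, hadj⟩ := hw
      have huS' := huS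
      rw [hSstar] at huS'
      obtain ⟨i, hi1, hin, rfl, _, _, _⟩ := huS'
      obtain ⟨j, hj1, hjn, hwj, hcase⟩ := part1 i hi1 hin huS w hadj
      rcases hcase with ⟨hlt, hjS⟩ | ⟨hgt, hjS⟩
      · left
        refine ⟨v (j+1), hjS, ?_⟩
        have hidx : idx (v (j+1)) = j + 1 :=
          hinj _ _ (hidx1 _) (hidx2 _) (by omega) (by omega) (hidx3 _)
        simp only [hidx, Nat.add_sub_cancel]
        exact hwj.symm
      · right
        refine ⟨v (j-1), hjS, ?_⟩
        have hidx : idx (v (j-1)) = j - 1 :=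
          hinj _ _ (hidx1 _) (hidx2 _) (by omega) (by omega) (hidx3 _)
        simp only [hidx]
        rw [show j - 1 + 1 = j by omega]
        exact hwj.symm
    calc NSstar.ncard ≤ (((fun w => v (idx w - 1)) '' S) ∪ ((fun w => v (idx w + 1)) '' S)).ncard :=
          Set.ncard_le_ncard hsub (Set.toFinite _)
      _ ≤ ((fun w => v (idx w - 1)) '' S).ncard + ((fun w => v (idx w + 1)) '' S).ncard :=
          Set.ncard_union_le _ _
      _ ≤ S.ncard + S.ncard := add_le_add (Set.ncard_image_le (Set.toFinite _)) (Set.ncard_image_le (Set.toFinite _))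
      _ = 2 * S.ncard := by ring
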